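/- Let (X,ρ) be an ultrametric space and define on ℝ≥0 × X the function d((s,i),(t,j)) = max{ρ(i,j) − s − t, |s−t|}. Then d is a pseudometric on ℝ≥0 × X. -/
import Mathlib


open scoped NNReal

/-- For an ultrametric space `(X,ρ)`, the function
`d((s,i),(t,j)) = max (ρ(i,j) − s − t) |s − t|` is a pseudometric on `ℝ≥0 × X`. -/
theorem stmt2 {X : Type*} [MetricSpace X]
    (hultra : ∀ x y z : X, dist x z ≤ max (dist x y) (dist y z)) :
    ∀ d : ℝ≥0 × X → ℝ≥0 × X → ℝ,
      (d = fun p q => max (dist p.2 q.2 - (p.1 : ℝ) - (q.1 : ℝ)) |(p.1 : ℝ) - (q.1 : ℝ)|) →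
      (∀ p, d p p = 0) ∧ (∀ p q, 0 ≤ d p q) ∧ (∀ p q, d p q = d q p) ∧
        (∀ p q s, d p s ≤ d p q + d q s) := by
  intro d hd
  subst hd
  refine ⟨?_, ?_, ?_, ?_⟩
  · intro p
    simp only [dist_self, sub_self, abs_zero]
    have : (0 : ℝ) - (p.1 : ℝ) - (p.1 : ℝ) ≤ 0 := by
      have := p.1.coe_nonneg; linarith
    simp [max_eq_right this]
  · intro p q
    exact le_max_of_le_right (abs_nonneg _)
  · intro p q
    simp only [dist_comm, abs_sub_comm]
    rw [show (dist p.2 q.2 : ℝ) - (p.1 : ℝ) - (q.1 : ℝ)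
        = dist p.2 q.2 - (q.1 : ℝ) - (p.1 : ℝ) by ring]
  · intro p q s
    simp only
    have habs1 : (q.1 : ℝ) - (s.1 : ℝ) ≤ |(q.1 : ℝ) - (s.1 : ℝ)| := le_abs_self _
    have habs2 : (p.1 : ℝ) - (q.1 : ℝ) ≤ |(p.1 : ℝ) - (q.1 : ℝ)| := le_abs_self _
    have habs3 : -((p.1 : ℝ) - (q.1 : ℝ)) ≤ |(p.1 : ℝ) - (q.1 : ℝ)| := neg_le_abs _
    have habs4 : -((q.1 : ℝ) - (s.1 : ℝ)) ≤ |(q.1 : ℝ) - (s.1 : ℝ)| := neg_le_abs _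
    have h1 := le_max_left (dist p.2 q.2 - (p.1 : ℝ) - (q.1 : ℝ)) |(p.1 : ℝ) - (q.1 : ℝ)|
    have h2 := le_max_left (dist q.2 s.2 - (q.1 : ℝ) - (s.1 : ℝ)) |(q.1 : ℝ) - (s.1 : ℝ)|
    have h1' := le_max_right (dist p.2 q.2 - (p.1 : ℝ) - (q.1 : ℝ)) |(p.1 : ℝ) - (q.1 : ℝ)|
    have h2' := le_max_right (dist q.2 s.2 - (q.1 : ℝ) - (s.1 : ℝ)) |(q.1 : ℝ) - (s.1 : ℝ)|
    apply max_le
    · rcases max_le_iff.mp (le_refl (max (dist p.2 q.2) (dist q.2 s.2))) with ⟨-, -⟩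
      rcases le_max_iff.mp (hultra p.2 q.2 s.2) with h | h
      · linarith
      · linarith
    · calc |(p.1 : ℝ) - (s.1 : ℝ)| ≤ |(p.1 : ℝ) - (q.1 : ℝ)| + |(q.1 : ℝ) - (s.1 : ℝ)| :=
            abs_sub_le _ _ _
        _ ≤ _ := add_le_add h1' h2'
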